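/- In L²(0,∞), the smallest nearly invariant subspace for the adjoint shift semigroup {S(t)*} containing e_δ(ζ) = e^{−ζ}·χ_{(δ,∞)}(ζ) (δ > 0) is the closed span of {e_λ : 0 ≤ λ ≤ δ}, and this equals L²(0,δ) + ℂ·e^{−ζ}. -/

import Mathlib

open MeasureTheory Complex Filter

noncomputable section

/-- Lebesgue measure on `(0, ∞)`. -/
def μz : Measure ℝ := volume.restrict (Set.Ioi (0 : ℝ))

/-- The space `L²(0, ∞)`. -/
abbrev L2z := MeasureTheory.Lp ℂ 2 μz

/-- `M` is nearly invariant for the adjoint shift semigroup `{S(t)^*}_{t ≥ 0}`: if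
`S(t) f ∈ M` for some `t > 0` then `f ∈ M`, where `(S(t) f)(ζ) = f(ζ - t)` for `ζ > t`
and `0` otherwise. -/
def NearlyShiftInv (M : Set L2z) : Prop :=
  ∀ f : L2z, ∀ t : ℝ, 0 < t →
    (∃ m ∈ M, (m : ℝ → ℂ) =ᵐ[μz] fun ζ : ℝ => if t < ζ then f (ζ - t) else 0) → f ∈ M

/-- `e_λ(ζ) = e^{-ζ} χ_((λ,∞))(ζ)`. -/
def eFun (lam : ℝ) : ℝ → ℂ := fun ζ : ℝ => if lam < ζ then Complex.exp (-(ζ : ℂ)) else 0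

/-- The closed span of `{e_λ : 0 ≤ λ ≤ δ}` in `L²(0, ∞)`. -/
def Espan (δ : ℝ) : Submodule ℂ L2z :=
  (Submodule.span ℂ {f : L2z | ∃ lam : ℝ, 0 ≤ lam ∧ lam ≤ δ ∧
    (f : ℝ → ℂ) =ᵐ[μz] eFun lam}).topologicalClosure

lemma measurable_eFun (lam : ℝ) : Measurable (eFun lam) := by
  unfold eFun
  exact Measurable.ite measurableSet_Ioi ((Complex.measurable_exp).comp
    (measurable_neg.comp Complex.measurable_ofReal)) measurable_const

lemma norm_eFun (lam ζ : ℝ) : ‖eFun lam ζ‖ = if lam < ζ then Real.exp (-ζ) else 0 := by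
  unfold eFun
  split_ifs <;> simp [Complex.norm_exp]

lemma memLp_eFun (lam : ℝ) : MemLp (eFun lam) 2 μz := by
  rw [memLp_two_iff_integrable_sq_norm (measurable_eFun lam).aestronglyMeasurable]
  have h2 : IntegrableOn (fun ζ : ℝ => Real.exp (-2 * ζ)) (Set.Ioi 0) volume :=
    exp_neg_integrableOn_Ioi 0 (by norm_num)
  refine (h2.mono' ?_ ?_)
  · exact ((measurable_eFun lam).norm.pow_const 2).aestronglyMeasurable
  · filter_upwards with ζ
    rw [norm_eFun]
    split_ifs with h
    · rw [Real.norm_eq_abs, _root_.abs_of_nonneg (by positivity : (0:ℝ) ≤ Real.exp (-ζ) ^ 2), sq, ← Real.exp_add]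
      apply le_of_eq
      congr 1
      ring
    · rw [Real.norm_eq_abs]
      norm_num
      positivity

def Elp (lam : ℝ) : L2z := (memLp_eFun lam).toLp (eFun lam)

lemma Elp_ae (lam : ℝ) : (Elp lam : ℝ → ℂ) =ᵐ[μz] eFun lam :=
  (memLp_eFun lam).coeFn_toLp

lemma ae_pos : ∀ᵐ ζ ∂μz, 0 < ζ := ae_restrict_mem measurableSet_Ioi

lemma ae_shift_add {t : ℝ} (ht : 0 < t) {p : ℝ → Prop} (h : ∀ᵐ ζ ∂μz, p ζ) :
    ∀ᵐ η ∂μz, p (η + t) := by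
  rw [ae_iff] at h ⊢
  rw [μz, Measure.restrict_apply' measurableSet_Ioi] at h ⊢
  obtain ⟨u, hsub, hum, hu0⟩ := exists_measurable_superset_of_null h
  have hpre : volume ((fun η : ℝ => η + t) ⁻¹' u) = 0 := by
    rw [(measurePreserving_add_right volume t).measure_preimage hum.nullMeasurableSet]
    exact hu0
  refine measure_mono_null (fun η hη => ?_) hpre
  have h0 : (0:ℝ) < η := hη.2
  exact hsub ⟨hη.1, show (0:ℝ) < η + t by linarith⟩

lemma ae_shift_sub {t : ℝ} (ht : 0 < t) {p : ℝ → Prop} (h : ∀ᵐ ζ ∂μz, p ζ) :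
    ∀ᵐ ζ ∂μz, t < ζ → p (ζ - t) := by
  rw [ae_iff] at h ⊢
  rw [μz, Measure.restrict_apply' measurableSet_Ioi] at h ⊢
  obtain ⟨u, hsub, hum, hu0⟩ := exists_measurable_superset_of_null h
  have hpre : volume ((fun ζ : ℝ => ζ - t) ⁻¹' u) = 0 := by
    rw [(measurePreserving_sub_right volume t).measure_preimage hum.nullMeasurableSet]
    exact hu0
  refine measure_mono_null (fun ζ hζ => ?_) hpre
  obtain ⟨ht', hp⟩ := _root_.not_imp.mp hζ.1
  exact hsub ⟨hp, show (0:ℝ) < ζ - t by linarith⟩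

local notation "⟪" x ", " y "⟫" => @inner ℂ _ _ x y

variable (δ : ℝ)

def Wsub : Submodule ℂ L2z where
  carrier := {h : L2z | ∀ᵐ ζ ∂μz, ζ ≤ δ → (h : ℝ → ℂ) ζ = 0}
  zero_mem' := by
    show ∀ᵐ ζ ∂μz, ζ ≤ δ → _
    filter_upwards [Lp.coeFn_zero ℂ 2 μz] with ζ h0 _
    simpa using h0
  add_mem' := fun {a b} ha hb => by
    show ∀ᵐ ζ ∂μz, ζ ≤ δ → _
    have ha' : ∀ᵐ ζ ∂μz, ζ ≤ δ → (a : ℝ → ℂ) ζ = 0 := ha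
    have hb' : ∀ᵐ ζ ∂μz, ζ ≤ δ → (b : ℝ → ℂ) ζ = 0 := hb
    filter_upwards [Lp.coeFn_add a b, ha', hb'] with ζ h1 h2 h3 h4
    rw [h1]
    simp [h2 h4, h3 h4]
  smul_mem' := fun c {a} ha => by
    show ∀ᵐ ζ ∂μz, ζ ≤ δ → _
    have ha' : ∀ᵐ ζ ∂μz, ζ ≤ δ → (a : ℝ → ℂ) ζ = 0 := ha
    filter_upwards [Lp.coeFn_smul c a, ha'] with ζ h1 h2 h3
    rw [h1]
    simp [h2 h3]

lemma mem_Wsub_iff (h : L2z) :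
    h ∈ Wsub δ ↔ ∀ᵐ ζ ∂μz, ζ ≤ δ → (h : ℝ → ℂ) ζ = 0 := Iff.rfl

lemma inner_L2_eq (f g : L2z) : ⟪f, g⟫ = ∫ ζ, (starRingEnd ℂ) ((f : ℝ → ℂ) ζ) * (g : ℝ → ℂ) ζ ∂μz := by
  rw [L2.inner_def]
  exact integral_congr_ae (Eventually.of_forall fun ζ => (RCLike.inner_apply _ _).trans (mul_comm _ _))

lemma mem_Wperp_iff (g : L2z) :
    g ∈ (Wsub δ)ᗮ ↔ ∀ᵐ ζ ∂μz, δ < ζ → (g : ℝ → ℂ) ζ = 0 := by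
  constructor
  · intro hg
    -- use the indicator of g on (δ, ∞)
    have hmem : MemLp (Set.indicator (Set.Ioi δ) (g : ℝ → ℂ)) 2 μz :=
      (Lp.memLp g).indicator measurableSet_Ioi
    set h : L2z := hmem.toLp _ with hh
    have hcoe : (h : ℝ → ℂ) =ᵐ[μz] Set.indicator (Set.Ioi δ) (g : ℝ → ℂ) := hmem.coeFn_toLp
    have hW : h ∈ Wsub δ := by
      filter_upwards [hcoe] with ζ h1 h2
      rw [h1, Set.indicator_of_notMem (by simpa using not_lt.mpr h2)]
    have h0 : ⟪h, g⟫ = 0 := (Submodule.mem_orthogonal _ _).mp hg h hW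
    rw [inner_L2_eq] at h0
    have hre : ∫ ζ, Set.indicator (Set.Ioi δ) (fun ζ => ‖(g : ℝ → ℂ) ζ‖ ^ 2) ζ ∂μz = 0 := by
      have : (∫ ζ, ((Set.indicator (Set.Ioi δ) (fun ζ => ‖(g : ℝ → ℂ) ζ‖ ^ 2) ζ : ℝ) : ℂ) ∂μz) = 0 := by
        rw [← h0]
        apply integral_congr_ae
        filter_upwards [hcoe] with ζ h1
        rw [h1]
        by_cases hζ : ζ ∈ Set.Ioi δ
        · rw [Set.indicator_of_mem hζ, Set.indicator_of_mem hζ]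
          rw [Complex.sq_norm, ← Complex.normSq_eq_conj_mul_self]
        · rw [Set.indicator_of_notMem hζ, Set.indicator_of_notMem hζ]
          simp
      have h3 := (integral_ofReal (𝕜 := ℂ)).symm.trans this
      exact Complex.ofReal_eq_zero.mp h3
    have hint : Integrable (fun ζ => ‖(g : ℝ → ℂ) ζ‖ ^ 2) μz :=
      (memLp_two_iff_integrable_sq_norm (Lp.aestronglyMeasurable g)).mp (Lp.memLp g)
    have hzero := (integral_eq_zero_iff_of_nonneg_ae
      (Eventually.of_forall fun ζ => Set.indicator_nonneg (fun ζ _ => by positivity) ζ)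
      (hint.indicator measurableSet_Ioi)).mp hre
    filter_upwards [hzero] with ζ h1 h2
    have : Set.indicator (Set.Ioi δ) (fun ζ => ‖(g : ℝ → ℂ) ζ‖ ^ 2) ζ = 0 := h1
    rw [Set.indicator_of_mem (by simpa using h2)] at this
    simpa using this
  · intro hg
    rw [Submodule.mem_orthogonal]
    intro h hW
    rw [inner_L2_eq]
    rw [show (0 : ℂ) = ∫ _, (0 : ℂ) ∂μz by simp]
    apply integral_congr_ae
    have hW' : ∀ᵐ ζ ∂μz, ζ ≤ δ → (h : ℝ → ℂ) ζ = 0 := hW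
    filter_upwards [hW', hg] with ζ h1 h2
    by_cases hζ : ζ ≤ δ
    · rw [h1 hζ]
      simp
    · rw [h2 (not_le.mp hζ)]
      simp

lemma Edelta_mem_W : Elp δ ∈ Wsub δ := by
  rw [mem_Wsub_iff]
  filter_upwards [Elp_ae δ] with ζ h1 h2
  rw [h1]
  simp only [eFun, if_neg (not_lt.mpr h2)]

lemma Edelta_ne_zero (hδ : 0 < δ) : Elp δ ≠ 0 := by
  intro h0
  have h1 : eFun δ =ᵐ[μz] 0 := by
    have h2 := Elp_ae δ
    rw [h0] at h2
    exact h2.symm.trans (Lp.coeFn_zero ℂ 2 μz)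
  have h2 : μz {ζ : ℝ | eFun δ ζ ≠ 0} = 0 := by
    simpa [EventuallyEq, ae_iff] using h1
  have h3 : {ζ : ℝ | eFun δ ζ ≠ 0} = Set.Ioi δ := by
    ext ζ
    simp only [Set.mem_setOf_eq, eFun, Set.mem_Ioi]
    split_ifs with h
    · simp [Complex.exp_ne_zero, h]
    · simp [h]
  rw [h3, μz, Measure.restrict_apply' measurableSet_Ioi,
    Set.inter_eq_self_of_subset_left (Set.Ioi_subset_Ioi hδ.le), Real.volume_Ioi] at h2
  exact ENNReal.top_ne_zero h2

lemma kappa_eq : ⟪Elp δ, Elp 0⟫ = ⟪Elp δ, Elp δ⟫ := by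
  rw [inner_L2_eq, inner_L2_eq]
  apply integral_congr_ae
  filter_upwards [Elp_ae δ, Elp_ae 0, ae_pos] with ζ h1 h2 h3
  rw [h1, h2]
  by_cases h : δ < ζ
  · simp only [eFun, if_pos h, if_pos h3]
  · simp only [eFun, if_neg h]
    simp

lemma kappa_ne_zero (hδ : 0 < δ) : ⟪Elp δ, Elp 0⟫ ≠ 0 := by
  rw [kappa_eq δ]
  simpa [inner_self_eq_zero] using Edelta_ne_zero δ hδ

def Rsub : Submodule ℂ L2z := (Wsub δ)ᗮ ⊔ ℂ ∙ (Elp 0)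

lemma Rsub_eq_preimage (hδ : 0 < δ) :
    (Rsub δ : Set L2z) = (fun f : L2z => f - ((⟪Elp δ, Elp 0⟫)⁻¹ * ⟪Elp δ, f⟫) • Elp 0) ⁻¹' ((Wsub δ)ᗮ : Set L2z) := by
  set κ := ⟪Elp δ, Elp 0⟫ with hκ
  ext f
  simp only [Set.mem_preimage, SetLike.mem_coe]
  constructor
  · intro hf
    obtain ⟨g, hg, s, hs, rfl⟩ := Submodule.mem_sup.mp hf
    obtain ⟨c, rfl⟩ := Submodule.mem_span_singleton.mp hs
    have hEg : ⟪Elp δ, g⟫ = 0 := (Submodule.mem_orthogonal _ _).mp hg _ (Edelta_mem_W δ)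
    have : κ⁻¹ * ⟪Elp δ, g + c • Elp 0⟫ = c := by
      rw [inner_add_right, inner_smul_right, hEg, zero_add, ← hκ, mul_comm c κ, ← mul_assoc,
        inv_mul_cancel₀ (kappa_ne_zero δ hδ), one_mul]
    rw [this]
    simpa using hg
  · intro hf
    have : f = (f - (κ⁻¹ * ⟪Elp δ, f⟫) • Elp 0) + (κ⁻¹ * ⟪Elp δ, f⟫) • Elp 0 := by abel
    rw [Rsub, this]
    exact Submodule.add_mem _ (Submodule.mem_sup_left hf)
      (Submodule.mem_sup_right (Submodule.mem_span_singleton.mpr ⟨_, rfl⟩))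

lemma Rsub_isClosed (hδ : 0 < δ) : IsClosed ((Rsub δ) : Set L2z) := by
  rw [Rsub_eq_preimage δ hδ]
  apply IsClosed.preimage
  · exact continuous_id.sub (by fun_prop)
  · exact (Submodule.isClosed_orthogonal _)

lemma mem_Rsub_iff (f : L2z) :
    f ∈ Rsub δ ↔ ∃ g : L2z, ∃ c : ℂ,
      (∀ᵐ ζ ∂μz, δ < ζ → (g : ℝ → ℂ) ζ = 0) ∧
      (∀ᵐ ζ ∂μz, (f : ℝ → ℂ) ζ = (g : ℝ → ℂ) ζ + c * Complex.exp (-(ζ : ℂ))) := by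
  constructor
  · intro hf
    obtain ⟨g, hg, s, hs, rfl⟩ := Submodule.mem_sup.mp hf
    obtain ⟨c, rfl⟩ := Submodule.mem_span_singleton.mp hs
    refine ⟨g, c, (mem_Wperp_iff δ g).mp hg, ?_⟩
    filter_upwards [Lp.coeFn_add g (c • Elp 0), Lp.coeFn_smul c (Elp 0),
      Elp_ae 0, ae_pos] with ζ h1 h2 h3 h4
    rw [h1, Pi.add_apply, h2, Pi.smul_apply, h3, smul_eq_mul]
    simp only [eFun, if_pos h4]
  · rintro ⟨g, c, hg, hf⟩
    have hfe : f = g + c • Elp 0 := by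
      apply Lp.ext
      filter_upwards [Lp.coeFn_add g (c • Elp 0), Lp.coeFn_smul c (Elp 0),
        Elp_ae 0, ae_pos, hf] with ζ h1 h2 h3 h4 h5
      rw [h5, h1, Pi.add_apply, h2, Pi.smul_apply, h3, smul_eq_mul]
      simp only [eFun, if_pos h4]
    rw [hfe]
    exact Submodule.add_mem _ (Submodule.mem_sup_left ((mem_Wperp_iff δ g).mpr hg))
      (Submodule.mem_sup_right (Submodule.mem_span_singleton.mpr ⟨_, rfl⟩))

lemma Espan_le_Rsub (hδ : 0 < δ) : Espan δ ≤ Rsub δ := by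
  apply Submodule.topologicalClosure_minimal
  · rw [Submodule.span_le]
    rintro f ⟨lam, h0, hlδ, hae⟩
    rw [SetLike.mem_coe, mem_Rsub_iff δ]
    refine ⟨f - Elp 0, 1, ?_, ?_⟩
    · filter_upwards [Lp.coeFn_sub f (Elp 0), Elp_ae 0, hae, ae_pos] with ζ h1 h2 h3 h4 h5
      rw [h1, Pi.sub_apply, h2, h3]
      simp only [eFun, if_pos h4, if_pos (lt_of_le_of_lt hlδ h5)]
      ring
    · filter_upwards [Lp.coeFn_sub f (Elp 0), Elp_ae 0, ae_pos] with ζ h1 h2 h3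
      rw [h1, Pi.sub_apply, h2]
      simp only [eFun, if_pos h3]
      ring
  · exact Rsub_isClosed δ hδ

lemma conj_exp_neg (ζ : ℝ) : (starRingEnd ℂ) (Complex.exp (-(ζ : ℂ))) = Complex.exp (-(ζ : ℂ)) := by
  rw [← Complex.exp_conj, map_neg, Complex.conj_ofReal]

lemma key_vanish (hδ : 0 < δ) (h : L2z)
    (hyp : ∀ lam : ℝ, 0 ≤ lam → lam ≤ δ → ⟪Elp lam, h⟫ = 0) :
    ∀ᵐ ζ ∂μz, ζ ≤ δ → (h : ℝ → ℂ) ζ = 0 := by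
  set φ : ℝ → ℂ := fun ζ => Complex.exp (-(ζ : ℂ)) * (h : ℝ → ℂ) ζ with hφ
  -- integrability
  have hφint : Integrable φ μz := by
    have h1 := L2.integrable_inner (𝕜 := ℂ) (Elp 0) h
    apply h1.congr
    filter_upwards [Elp_ae 0, ae_pos] with ζ h2 h3
    rw [RCLike.inner_apply, h2]
    simp only [eFun, if_pos h3, hφ, conj_exp_neg]
    ring
  have hIntOn : IntegrableOn φ (Set.Ioi (0:ℝ)) volume := hφint
  -- the basic vanishing integrals over tails
  have hA : ∀ lam : ℝ, 0 ≤ lam → lam ≤ δ → ∫ ζ in Set.Ioi lam, φ ζ = 0 := by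
    intro lam h0 h1
    have h2 := hyp lam h0 h1
    rw [inner_L2_eq] at h2
    have h3 : ∫ ζ, Set.indicator (Set.Ioi lam) φ ζ ∂μz = 0 := by
      rw [← h2]
      apply integral_congr_ae
      filter_upwards [Elp_ae lam] with ζ h4
      rw [h4]
      by_cases h5 : lam < ζ
      · rw [Set.indicator_of_mem (Set.mem_Ioi.mpr h5)]
        simp only [eFun, if_pos h5, hφ, conj_exp_neg]
      · rw [Set.indicator_of_notMem (fun hx => h5 (Set.mem_Ioi.mp hx))]
        simp only [eFun, if_neg h5]
        simp
    rw [integral_indicator measurableSet_Ioi] at h3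
    rw [μz, Measure.restrict_restrict measurableSet_Ioi,
      Set.inter_eq_self_of_subset_left (Set.Ioi_subset_Ioi h0)] at h3
    exact h3
  -- vanishing over Ioc a δ
  have hB : ∀ a : ℝ, 0 ≤ a → a ≤ δ → ∫ ζ in Set.Ioc a δ, φ ζ = 0 := by
    intro a h0 h1
    have h2 := hA a h0 h1
    rw [← Set.Ioc_union_Ioi_eq_Ioi h1,
      setIntegral_union (Set.Ioc_disjoint_Ioi le_rfl) measurableSet_Ioi
        (hIntOn.mono_set (fun x hx => lt_of_le_of_lt h0 hx.1))
        (hIntOn.mono_set (Set.Ioi_subset_Ioi (h0.trans h1))),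
      hA δ hδ.le le_rfl, add_zero] at h2
    exact h2
  -- Dynkin system argument on (0, δ]
  have hφν : Integrable φ (volume.restrict (Set.Ioc 0 δ)) :=
    hIntOn.mono_set Set.Ioc_subset_Ioi_self
  have hP : ∀ s : Set ℝ, MeasurableSet s →
      ∫ ζ in s, φ ζ ∂(volume.restrict (Set.Ioc 0 δ)) = 0 := by
    have h_eq : (inferInstance : MeasurableSpace ℝ) =
        MeasurableSpace.generateFrom { S : Set ℝ | ∃ l u, l < u ∧ Set.Ioc l u = S } := by
      rw [BorelSpace.measurable_eq (α := ℝ), borel_eq_generateFrom_Ioc ℝ]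
    intro s hs
    refine MeasurableSpace.induction_on_inter
      (C := fun s _ => ∫ ζ in s, φ ζ ∂(volume.restrict (Set.Ioc 0 δ)) = 0) h_eq
      (isPiSystem_Ioc (id : ℝ → ℝ) (id : ℝ → ℝ)) ?_ ?_ ?_ ?_ s hs
    · simp
    · rintro t ⟨l, u, hlu, rfl⟩
      rw [Measure.restrict_restrict measurableSet_Ioc, Set.Ioc_inter_Ioc]
      by_cases hab : max l 0 < min u δ
      · have h0a : (0:ℝ) ≤ max l 0 := le_max_right _ _
        have haδ : max l 0 ≤ δ := le_of_lt (lt_of_lt_of_le hab (min_le_right _ _))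
        have h0b : (0:ℝ) ≤ min u δ := le_of_lt (lt_of_le_of_lt h0a hab)
        have hbδ : min u δ ≤ δ := min_le_right _ _
        have hsplit := hB (max l 0) h0a haδ
        rw [← Set.Ioc_union_Ioc_eq_Ioc hab.le hbδ,
          setIntegral_union (Set.Ioc_disjoint_Ioc_of_le le_rfl) measurableSet_Ioc
            (hIntOn.mono_set (fun x hx => lt_of_le_of_lt h0a hx.1))
            (hIntOn.mono_set (fun x hx => lt_of_le_of_lt h0b hx.1)),
          hB (min u δ) h0b hbδ, add_zero] at hsplit
        exact hsplit
      · rw [Set.Ioc_eq_empty hab]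
        simp
    · intro t ht hC
      have h1 := integral_add_compl ht hφν
      rw [hC, zero_add] at h1
      rw [h1]
      exact hB 0 le_rfl hδ.le
    · intro f hd hm hC
      rw [integral_iUnion hm hd hφν.integrableOn]
      simp [hC]
  have hzero : φ =ᵐ[volume.restrict (Set.Ioc 0 δ)] 0 :=
    hφν.ae_eq_zero_of_forall_setIntegral_eq_zero (fun s hs _ => hP s hs)
  rw [EventuallyEq, ae_iff] at hzero
  rw [ae_iff]
  simp only [μz]
  rw [Measure.restrict_apply' measurableSet_Ioi]
  rw [Measure.restrict_apply' measurableSet_Ioc] at hzero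
  refine measure_mono_null (fun ζ hζ => ?_) hzero
  obtain ⟨hbad, hζ0⟩ := hζ
  obtain ⟨hle, hne⟩ := _root_.not_imp.mp hbad
  refine ⟨?_, hζ0, hle⟩
  simp only [Set.mem_setOf_eq, Pi.zero_apply, hφ]
  exact mul_ne_zero (Complex.exp_ne_zero _) hne

lemma Rsub_le_Espan (hδ : 0 < δ) : Rsub δ ≤ Espan δ := by
  rw [Espan, ← Submodule.orthogonal_orthogonal_eq_closure]
  intro f hf
  rw [Submodule.mem_orthogonal]
  intro u hu
  have hu' : ∀ lam : ℝ, 0 ≤ lam → lam ≤ δ → ⟪Elp lam, u⟫ = 0 := fun lam h0 h1 =>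
    (Submodule.mem_orthogonal _ _).mp hu _ (Submodule.subset_span ⟨lam, h0, h1, Elp_ae lam⟩)
  have huW : u ∈ Wsub δ := key_vanish δ hδ u hu'
  obtain ⟨g, hg, s, hs, rfl⟩ := Submodule.mem_sup.mp hf
  obtain ⟨c, rfl⟩ := Submodule.mem_span_singleton.mp hs
  rw [inner_add_right, inner_smul_right,
    (Submodule.mem_orthogonal _ _).mp hg u huW,
    show ⟪u, Elp 0⟫ = (0:ℂ) by rw [← inner_conj_symm, hu' 0 le_rfl hδ.le, map_zero]]
  ring

lemma Espan_eq_Rsub (hδ : 0 < δ) : Espan δ = Rsub δ :=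
  le_antisymm (Espan_le_Rsub δ hδ) (Rsub_le_Espan δ hδ)


/-- The smallest nearly `{S(t)^*}`-invariant subspace of `L²(0,∞)`
containing `e_δ` is the closed span of `{e_λ : 0 ≤ λ ≤ δ}`, which equals
`L²(0,δ) + ℂ e^{-ζ}`. -/
theorem cyclic_stmt11 (δ : ℝ) (hδ : 0 < δ) :
    NearlyShiftInv (Espan δ : Set L2z) ∧
    (∃ e ∈ Espan δ, (e : ℝ → ℂ) =ᵐ[μz] eFun δ) ∧
    (∀ M : Submodule ℂ L2z, IsClosed (M : Set L2z) → NearlyShiftInv (M : Set L2z) →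
      (∃ e ∈ M, (e : ℝ → ℂ) =ᵐ[μz] eFun δ) → Espan δ ≤ M) ∧
    (Espan δ : Set L2z) = {f : L2z | ∃ g : L2z, ∃ c : ℂ,
      (∀ᵐ ζ ∂μz, δ < ζ → g ζ = 0) ∧
      (∀ᵐ ζ ∂μz, f ζ = g ζ + c * Complex.exp (-(ζ : ℂ)))} := by
  have hEq := Espan_eq_Rsub δ hδ
  refine ⟨?_, ?_, ?_, ?_⟩
  · -- nearly invariant
    rintro f t ht ⟨m, hm, hae⟩
    rw [SetLike.mem_coe, hEq] at hm ⊢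
    obtain ⟨g, c, hg1, hg2⟩ := (mem_Rsub_iff δ m).mp hm
    rw [mem_Rsub_iff]
    refine ⟨f - (c * Complex.exp (-(t:ℂ))) • Elp 0, c * Complex.exp (-(t:ℂ)), ?_, ?_⟩
    · have hQ : ∀ᵐ ζ ∂μz, ((m : ℝ → ℂ) ζ = if t < ζ then (f : ℝ → ℂ) (ζ - t) else 0) ∧
          ((δ < ζ → (g : ℝ → ℂ) ζ = 0) ∧
            (m : ℝ → ℂ) ζ = (g : ℝ → ℂ) ζ + c * Complex.exp (-(ζ:ℂ))) :=
        hae.and (hg1.and hg2)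
      have hQ' := ae_shift_add ht hQ
      filter_upwards [hQ', Lp.coeFn_sub f ((c * Complex.exp (-(t:ℂ))) • Elp 0),
        Lp.coeFn_smul (c * Complex.exp (-(t:ℂ))) (Elp 0), Elp_ae 0, ae_pos] with η h1 h2 h3 h4 h5 h6
      have hfη : (f : ℝ → ℂ) η = c * Complex.exp (-(t:ℂ)) * Complex.exp (-(η:ℂ)) := by
        have e1 : (m : ℝ → ℂ) (η + t) = (f : ℝ → ℂ) η := by
          rw [h1.1, if_pos (by linarith), add_sub_cancel_right]
        have e2 := h1.2.2
        rw [h1.2.1 (by linarith), zero_add, e1] at e2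
        rw [e2, show (-(((η:ℝ) + t : ℝ) : ℂ)) = -(t:ℂ) + -(η:ℂ) by push_cast; ring,
          Complex.exp_add]
        ring
      rw [h2, Pi.sub_apply, h3, Pi.smul_apply, h4, smul_eq_mul]
      simp only [eFun, if_pos h5]
      rw [hfη]
      ring
    · filter_upwards [Lp.coeFn_sub f ((c * Complex.exp (-(t:ℂ))) • Elp 0),
        Lp.coeFn_smul (c * Complex.exp (-(t:ℂ))) (Elp 0), Elp_ae 0, ae_pos] with ζ h1 h2 h3 h4
      rw [h1, Pi.sub_apply, h2, Pi.smul_apply, h3, smul_eq_mul]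
      simp only [eFun, if_pos h4]
      ring
  · -- contains e_δ
    exact ⟨Elp δ, Submodule.le_topologicalClosure _
      (Submodule.subset_span ⟨δ, hδ.le, le_rfl, Elp_ae δ⟩), Elp_ae δ⟩
  · -- minimality
    rintro M hMclosed hMinv ⟨e, heM, heae⟩
    refine Submodule.topologicalClosure_minimal (s := Submodule.span ℂ {f : L2z | ∃ lam : ℝ,
      0 ≤ lam ∧ lam ≤ δ ∧ (f : ℝ → ℂ) =ᵐ[μz] eFun lam}) ?_ hMclosed
    rw [Submodule.span_le]
    rintro f ⟨lam, h0, hlδ, hae⟩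
    rcases eq_or_lt_of_le hlδ with heq | hlt
    · subst heq
      have : f = e := Lp.ext (hae.trans heae.symm)
      exact this ▸ heM
    · apply hMinv f (δ - lam) (by linarith)
      refine ⟨Complex.exp ((δ - lam : ℝ) : ℂ) • e, Submodule.smul_mem M _ heM, ?_⟩
      have haef := ae_shift_sub (show (0:ℝ) < δ - lam by linarith) hae
      filter_upwards [Lp.coeFn_smul (Complex.exp ((δ - lam : ℝ) : ℂ)) e, heae, haef]
        with ζ h1 h2 h3
      rw [h1, Pi.smul_apply, h2, smul_eq_mul]
      by_cases hζ : δ - lam < ζ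
      · rw [if_pos hζ, h3 hζ]
        simp only [eFun]
        by_cases hδζ : δ < ζ
        · rw [if_pos hδζ, if_pos (show lam < ζ - (δ - lam) by linarith)]
          rw [← Complex.exp_add]
          congr 1
          push_cast
          ring
        · rw [if_neg hδζ, if_neg (show ¬ lam < ζ - (δ - lam) by
            rw [not_lt] at hδζ ⊢; linarith), mul_zero]
      · rw [if_neg hζ]
        rw [not_lt] at hζ
        simp only [eFun, if_neg (show ¬ δ < ζ by rw [not_lt]; linarith), mul_zero]
  · -- characterization
    ext f
    rw [SetLike.mem_coe, hEq, Set.mem_setOf_eq]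
    exact mem_Rsub_iff δ f

end
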